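/- Suppose the Brascamp–Lieb datum (B,c) is feasible and ∑_{j=1}^m c_j B_j^* B_j = I_n. Then ∏_{j=1}^m (det(B_j B_j^*))^{c_j} ≤ 1. -/

import Mathlib

open MeasureTheory ENNReal Matrix Filter Topology

noncomputable section

/-- The space of `m`-transformations: tuples of linear maps `ℝ^n → ℝ^{n_j}`,
represented as matrices. -/
abbrev MTrans (m n : ℕ) (nd : Fin m → ℕ) := ∀ j : Fin m, Matrix (Fin (nd j)) (Fin n) ℝ

/-- A valid input for the Brascamp–Lieb inequality: each `f j` is measurable and
has positive finite integral. -/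
def IsInput {m : ℕ} {nd : Fin m → ℕ} (f : ∀ j : Fin m, (Fin (nd j) → ℝ) → ℝ≥0∞) : Prop :=
  ∀ j, Measurable (f j) ∧ 0 < ∫⁻ y, f j y ∧ ∫⁻ y, f j y < ⊤

/-- The Brascamp–Lieb ratio `BL(B,c;f)`. -/
def BLratio {m n : ℕ} {nd : Fin m → ℕ} (B : MTrans m n nd) (c : Fin m → ℝ)
    (f : ∀ j : Fin m, (Fin (nd j) → ℝ) → ℝ≥0∞) : ℝ≥0∞ :=
  (∫⁻ x : Fin n → ℝ, ∏ j, f j (B j *ᵥ x) ^ c j) / ∏ j, (∫⁻ y, f j y) ^ c j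

/-- The Brascamp–Lieb constant `BL(B,c)`. -/
def BLconst {m n : ℕ} {nd : Fin m → ℕ} (B : MTrans m n nd) (c : Fin m → ℝ) : ℝ≥0∞ :=
  ⨆ (f : ∀ j : Fin m, (Fin (nd j) → ℝ) → ℝ≥0∞) (_ : IsInput f), BLratio B c f

/-- Membership in `F(c)`: finite BL constant and projection-normalised. -/
def MemF {m n : ℕ} {nd : Fin m → ℕ} (B : MTrans m n nd) (c : Fin m → ℝ) : Prop :=
  BLconst B c < ⊤ ∧ ∀ j, B j * (B j)ᵀ = 1

/-- Membership in `G(c)`: the datum `(B,c)` is geometric. -/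
def Geometric {m n : ℕ} {nd : Fin m → ℕ} (B : MTrans m n nd) (c : Fin m → ℝ) : Prop :=
  (∀ j, B j * (B j)ᵀ = 1) ∧ ∑ j, c j • ((B j)ᵀ * B j) = 1

/-- Equivalence of `m`-transformations: `B̃_j = T_j⁻¹ B_j T` for invertible `T, T_j`. -/
def EquivTrans {m n : ℕ} {nd : Fin m → ℕ} (B Bt : MTrans m n nd) : Prop :=
  ∃ (T : Matrix (Fin n) (Fin n) ℝ) (Tj : ∀ j, Matrix (Fin (nd j)) (Fin (nd j)) ℝ),
    IsUnit T ∧ (∀ j, IsUnit (Tj j)) ∧ ∀ j, Bt j = (Tj j)⁻¹ * B j * T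

/-- The square root of a positive semidefinite matrix, as `Matrix.PosSemidef.sqrt` was
defined in Mathlib (Dec 2024); removed from current Mathlib. -/
def Matrix.PosSemidef.sqrt {n 𝕜 : Type*} [Fintype n] [DecidableEq n] [RCLike 𝕜]
    [PartialOrder 𝕜] {A : Matrix n n 𝕜} (hA : A.PosSemidef) : Matrix n n 𝕜 :=
  hA.1.eigenvectorUnitary.1 * diagonal ((↑) ∘ (√·) ∘ hA.1.eigenvalues) *
  (star hA.1.eigenvectorUnitary : Matrix n n 𝕜)

open Classical in
/-- The map `φ`: `φ(B)_j = (B_j B_j^*)^{-1/2} B_j` (defined where `B_j B_j^*` is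
positive definite, and as `B_j` otherwise). -/
def phiMap {m n : ℕ} {nd : Fin m → ℕ} (B : MTrans m n nd) : MTrans m n nd := fun j =>
  if h : (B j * (B j)ᵀ).PosDef then (h.posSemidef.sqrt)⁻¹ * B j else B j

open Classical in
/-- The map `ψ`: `ψ(B)_j = B_j M^{-1/2}` with `M = ∑ c_j B_j^* B_j` (defined where `M`
is positive definite, and as `B_j` otherwise). -/
def psiMap {m n : ℕ} {nd : Fin m → ℕ} (c : Fin m → ℝ) (B : MTrans m n nd) : MTrans m n nd :=
  fun j =>
    if h : (∑ i, c i • ((B i)ᵀ * B i)).PosDef then B j * (h.posSemidef.sqrt)⁻¹ else B j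

/-- The BL scaling map `Φ = φ ∘ ψ`. -/
def PhiMap {m n : ℕ} {nd : Fin m → ℕ} (c : Fin m → ℝ) (B : MTrans m n nd) : MTrans m n nd :=
  phiMap (psiMap c B)

/-- The operator norm of a matrix, viewed as a linear map between Euclidean spaces. -/
def opNorm {a b : ℕ} (A : Matrix (Fin a) (Fin b) ℝ) : ℝ :=
  ‖LinearMap.toContinuousLinearMap (Matrix.toEuclideanLin A)‖


open Real in
lemma aux_det_le_exp_trace {k : ℕ} {A : Matrix (Fin k) (Fin k) ℝ} (hA : A.PosSemidef) :
    A.det ≤ Real.exp (A.trace - k) := by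
  have hH := hA.1
  have hdet : A.det = ∏ i, hH.eigenvalues i := by
    simpa using hH.det_eq_prod_eigenvalues
  have htr : A.trace = ∑ i, hH.eigenvalues i := by
    simpa using hH.trace_eq_sum_eigenvalues
  rw [hdet, htr]
  calc ∏ i, hH.eigenvalues i ≤ ∏ i, Real.exp (hH.eigenvalues i - 1) := by
        refine Finset.prod_le_prod (fun i _ => hA.eigenvalues_nonneg i) (fun i _ => ?_)
        have := Real.add_one_le_exp (hH.eigenvalues i - 1)
        linarith
    _ = Real.exp (∑ i, (hH.eigenvalues i - 1)) := by rw [Real.exp_sum]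
    _ = Real.exp (∑ i, hH.eigenvalues i - k) := by
        rw [Finset.sum_sub_distrib]; simp

open Real in
lemma aux_gauss_lintegral (k : ℕ) {b : ℝ} (hb : 0 < b) :
    ∫⁻ x : Fin k → ℝ, ENNReal.ofReal (Real.exp (-b * ∑ i, x i ^ 2))
      = ENNReal.ofReal ((π / b) ^ ((k : ℝ) / 2)) := by
  have hmp := EuclideanSpace.volume_preserving_symm_measurableEquiv_toLp (Fin k)
  have hmeas : Measurable fun x : Fin k → ℝ => ENNReal.ofReal (Real.exp (-b * ∑ i, x i ^ 2)) := by
    measurability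
  rw [← hmp.lintegral_comp hmeas]
  have heq : ∀ v : EuclideanSpace ℝ (Fin k),
      ENNReal.ofReal (Real.exp (-b * ∑ i, (MeasurableEquiv.toLp 2 (Fin k → ℝ)).symm v i ^ 2))
        = ENNReal.ofReal (Real.exp (-b * ‖v‖ ^ 2)) := by
    intro v
    congr 2
    rw [EuclideanSpace.norm_eq, Real.sq_sqrt (by positivity)]
    simp [sq_abs]
  calc ∫⁻ v : EuclideanSpace ℝ (Fin k),
        ENNReal.ofReal (Real.exp (-b * ∑ i, (MeasurableEquiv.toLp 2 (Fin k → ℝ)).symm v i ^ 2))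
      = ∫⁻ v : EuclideanSpace ℝ (Fin k), ENNReal.ofReal (Real.exp (-b * ‖v‖ ^ 2)) := by
        simp_rw [heq]
    _ = ENNReal.ofReal ((π / b) ^ ((k : ℝ) / 2)) := by
        have hint : Integrable (fun v : EuclideanSpace ℝ (Fin k) => Real.exp (-b * ‖v‖ ^ 2)) := by
          have h := (GaussianFourier.integrable_cexp_neg_mul_sq_norm_add
            (V := EuclideanSpace ℝ (Fin k)) (b := (b : ℂ)) (by simpa using hb) 0
            (0 : EuclideanSpace ℝ (Fin k))).norm
          convert h using 2 with v
          simp [Complex.norm_exp]; left; norm_cast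
        rw [← ofReal_integral_eq_lintegral_ofReal hint
          (Filter.Eventually.of_forall fun v => (Real.exp_pos _).le)]
        congr 1
        have := GaussianFourier.integral_rexp_neg_mul_sq_norm (V := EuclideanSpace ℝ (Fin k)) hb
        simpa using this

lemma aux_det_nonneg {k : ℕ} {A : Matrix (Fin k) (Fin k) ℝ} (hA : A.PosSemidef) :
    0 ≤ A.det := by
  rw [show A.det = ∏ i, hA.1.eigenvalues i by simpa using hA.1.det_eq_prod_eigenvalues]
  exact Finset.prod_nonneg fun i _ => hA.eigenvalues_nonneg i

lemma aux_sum_quad {m n : ℕ} {nd : Fin m → ℕ} (c : Fin m → ℝ) (B : MTrans m n nd)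
    (hiso : ∑ j, c j • ((B j)ᵀ * B j) = 1) (x : Fin n → ℝ) :
    ∑ j, c j * ∑ i, (B j *ᵥ x) i ^ 2 = ∑ i, x i ^ 2 := by
  have hQ : ∀ j, ∑ i, (B j *ᵥ x) i ^ 2 = x ⬝ᵥ (((B j)ᵀ * B j) *ᵥ x) := by
    intro j
    rw [← Matrix.mulVec_mulVec, Matrix.dotProduct_mulVec, Matrix.vecMul_transpose]
    simp [dotProduct, sq]
  simp_rw [hQ]
  have : ∑ j, c j * (x ⬝ᵥ (((B j)ᵀ * B j) *ᵥ x))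
      = x ⬝ᵥ ((∑ j, c j • ((B j)ᵀ * B j)) *ᵥ x) := by
    simp only [dotProduct, Matrix.mulVec, Matrix.sum_apply, Matrix.smul_apply,
      Finset.sum_apply, Finset.mul_sum, Finset.sum_mul, smul_eq_mul]
    rw [Finset.sum_comm]
    refine Finset.sum_congr rfl fun i _ => ?_
    rw [Finset.sum_comm]
    refine Finset.sum_congr rfl fun j _ => Finset.sum_congr rfl fun k _ => by ring
  rw [this, hiso, Matrix.one_mulVec]
  simp [dotProduct, sq]

theorem prod_det_proj_le_one {m n : ℕ} {nd : Fin m → ℕ} (c : Fin m → ℝ)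
    (hc : ∀ j, 0 < c j) (B : MTrans m n nd) (hB : BLconst B c < ⊤)
    (hiso : ∑ j, c j • ((B j)ᵀ * B j) = 1) :
    ∏ j, (B j * (B j)ᵀ).det ^ c j ≤ 1 := by
  classical
  -- trace identity
  have htr : ∑ j, c j * ((B j) * (B j)ᵀ).trace = (n : ℝ) := by
    have h := congrArg Matrix.trace hiso
    rw [Matrix.trace_sum] at h
    simp only [Matrix.trace_smul, smul_eq_mul, Matrix.trace_one, Fintype.card_fin] at h
    calc ∑ j, c j * ((B j) * (B j)ᵀ).trace
        = ∑ j, c j * ((B j)ᵀ * (B j)).trace := by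
          refine Finset.sum_congr rfl fun j _ => ?_
          rw [Matrix.trace_mul_comm]
      _ = (n : ℝ) := h
  -- scaling condition from feasibility
  have hs : (n : ℝ) ≤ ∑ j, c j * (nd j : ℝ) := by
    by_contra hlt
    push_neg at hlt
    set s := ∑ j, c j * (nd j : ℝ) with hs_def
    have hTne : BLconst B c ≠ ⊤ := hB.ne
    set T := (BLconst B c).toReal with hT_def
    have hT0 : 0 ≤ T := ENNReal.toReal_nonneg
    have hns : (0 : ℝ) < ((n : ℝ) - s) / 2 := by linarith
    set R : ℝ := (T + 1) ^ (2 / ((n : ℝ) - s)) with hR_def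
    have hR0 : 0 < R := Real.rpow_pos_of_pos (by linarith) _
    have hRval : R ^ (((n : ℝ) - s) / 2) = T + 1 := by
      rw [hR_def, ← Real.rpow_mul (by linarith)]
      have h2 : (2 / ((n : ℝ) - s)) * (((n : ℝ) - s) / 2) = 1 := by
        have h3 : (0 : ℝ) < ((n : ℝ) - s) * 2 := by linarith
        rw [div_mul_div_comm, mul_comm]
        exact div_self h3.ne'
      rw [h2, Real.rpow_one]
    set b : ℝ := Real.pi / R with hb_def
    have hbpos : 0 < b := div_pos Real.pi_pos hR0
    have hπb : Real.pi / b = R := by rw [hb_def]; field_simp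
    set f : ∀ j : Fin m, (Fin (nd j) → ℝ) → ℝ≥0∞ :=
      fun j y => ENNReal.ofReal (Real.exp (-b * ∑ i, y i ^ 2)) with hf_def
    have hfint : ∀ k : ℕ, ∫⁻ y : Fin k → ℝ, ENNReal.ofReal (Real.exp (-b * ∑ i, y i ^ 2))
        = ENNReal.ofReal (R ^ ((k : ℝ) / 2)) := by
      intro k; rw [aux_gauss_lintegral k hbpos, hπb]
    have hinput : IsInput f := by
      intro j
      refine ⟨?_, ?_, ?_⟩
      · exact (Real.continuous_exp.comp (continuous_const.mul
          (continuous_finset_sum _ fun i _ => (continuous_apply i).pow 2))).measurable.ennreal_ofReal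
      · rw [hf_def, hfint]
        exact ENNReal.ofReal_pos.mpr (Real.rpow_pos_of_pos hR0 _)
      · rw [hf_def, hfint]
        exact ENNReal.ofReal_lt_top
    have hle : BLratio B c f ≤ BLconst B c := by
      unfold BLconst
      exact le_iSup₂ (f := fun g (_ : IsInput g) => BLratio B c g) f hinput
    have hnum : (∫⁻ x : Fin n → ℝ, ∏ j, f j (B j *ᵥ x) ^ c j)
        = ENNReal.ofReal (R ^ ((n : ℝ) / 2)) := by
      have hpt : ∀ x : Fin n → ℝ, ∏ j, f j (B j *ᵥ x) ^ c j
          = ENNReal.ofReal (Real.exp (-b * ∑ i, x i ^ 2)) := by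
        intro x
        have h1 : ∀ j, f j (B j *ᵥ x) ^ c j
            = ENNReal.ofReal (Real.exp ((-b * ∑ i, (B j *ᵥ x) i ^ 2) * c j)) := by
          intro j
          rw [hf_def]
          rw [ENNReal.ofReal_rpow_of_pos (Real.exp_pos _), ← Real.exp_mul]
        simp_rw [h1]
        rw [← ENNReal.ofReal_prod_of_nonneg (fun j _ => (Real.exp_pos _).le), ← Real.exp_sum]
        congr 2
        calc ∑ j, (-b * ∑ i, (B j *ᵥ x) i ^ 2) * c j
            = -b * ∑ j, c j * ∑ i, (B j *ᵥ x) i ^ 2 := by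
              rw [Finset.mul_sum]
              exact Finset.sum_congr rfl fun j _ => by ring
          _ = -b * ∑ i, x i ^ 2 := by rw [aux_sum_quad c B hiso x]
      simp_rw [hpt]
      exact hfint n
    have hden : ∏ j, (∫⁻ y, f j y) ^ c j = ENNReal.ofReal (R ^ (s / 2)) := by
      have h1 : ∀ j, (∫⁻ y, f j y) ^ c j
          = ENNReal.ofReal (R ^ ((nd j : ℝ) / 2 * c j)) := by
        intro j
        rw [hf_def, hfint, ENNReal.ofReal_rpow_of_pos (Real.rpow_pos_of_pos hR0 _),
          ← Real.rpow_mul hR0.le]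
      simp_rw [h1]
      rw [← ENNReal.ofReal_prod_of_nonneg (fun j _ => (Real.rpow_pos_of_pos hR0 _).le),
        ← Real.rpow_sum_of_pos hR0]
      congr 2
      rw [hs_def, Finset.sum_div]
      exact Finset.sum_congr rfl fun j _ => by ring
    have hratio : BLratio B c f = ENNReal.ofReal (R ^ (((n : ℝ) - s) / 2)) := by
      rw [BLratio, hnum, hden, ← ENNReal.ofReal_div_of_pos (Real.rpow_pos_of_pos hR0 _),
        ← Real.rpow_sub hR0, sub_div]
    rw [hratio, hRval] at hle
    rw [← ENNReal.ofReal_toReal hTne, ← hT_def] at hle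
    have := (ENNReal.ofReal_le_ofReal_iff hT0).mp hle
    linarith
  -- positive semidefiniteness
  have hpsd : ∀ j, (B j * (B j)ᵀ).PosSemidef := by
    intro j
    have := Matrix.posSemidef_self_mul_conjTranspose (B j)
    rwa [Matrix.conjTranspose_eq_transpose_of_trivial] at this
  -- conclusion
  calc ∏ j, (B j * (B j)ᵀ).det ^ c j
      ≤ ∏ j, Real.exp ((((B j) * (B j)ᵀ).trace - (nd j : ℝ)) * c j) := by
        refine Finset.prod_le_prod (fun j _ => Real.rpow_nonneg (aux_det_nonneg (hpsd j)) _)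
          (fun j _ => ?_)
        rw [Real.exp_mul]
        exact Real.rpow_le_rpow (aux_det_nonneg (hpsd j)) (aux_det_le_exp_trace (hpsd j)) (hc j).le
    _ = Real.exp (∑ j, (((B j) * (B j)ᵀ).trace - (nd j : ℝ)) * c j) := (Real.exp_sum _ _).symm
    _ ≤ 1 := by
        rw [Real.exp_le_one_iff]
        have e1 : ∑ j, (((B j) * (B j)ᵀ).trace - (nd j : ℝ)) * c j
            = (∑ j, c j * ((B j) * (B j)ᵀ).trace) - ∑ j, c j * (nd j : ℝ) := by
          rw [← Finset.sum_sub_distrib]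
          exact Finset.sum_congr rfl fun j _ => by ring
        rw [e1, htr]
        linarith


end
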